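/- Fix n, I, l with 1 ≤ I < l ≤ n. The symmetric n×n matrix M with M(i,l) = M(l,i) = 2 for I ≤ i ≤ l−1 and all other entries 0 (the c(I,l)-formation) is the CN matrix of some pure braid projection word on n strands. -/

import Mathlib

/-- Left position of a crossing letter, as an element of `Fin n`. -/
def posL (n : ℕ) (k : Fin (n - 1)) : Fin n := ⟨k.val, by have := k.isLt; omega⟩

/-- Right position of a crossing letter, as an element of `Fin n`. -/
def posR (n : ℕ) (k : Fin (n - 1)) : Fin n := ⟨k.val + 1, by have := k.isLt; omega⟩

/-- The transposition of positions induced by a crossing letter. -/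
def braidSwap (n : ℕ) (k : Fin (n - 1)) : Equiv.Perm (Fin n) :=
  Equiv.swap (posL n k) (posR n k)

/-- CN matrix of a braid projection word, scanning with position-to-strand
assignment `π`.  Each letter records one crossing between the two strand
labels currently at the involved positions (counted symmetrically). -/
def CNaux (n : ℕ) : Equiv.Perm (Fin n) → List (Fin (n - 1)) → Matrix (Fin n) (Fin n) ℕ
  | _, [] => 0
  | π, k :: w =>
      Matrix.single (π (posL n k)) (π (posR n k)) 1 +
      Matrix.single (π (posR n k)) (π (posL n k)) 1 +
      CNaux n (π * braidSwap n k) w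

/-- CN matrix of a braid projection word on `n` strands. -/
def CN (n : ℕ) (w : List (Fin (n - 1))) : Matrix (Fin n) (Fin n) ℕ := CNaux n 1 w

/-- Final position-to-strand assignment after scanning the word. -/
def finalPerm (n : ℕ) : Equiv.Perm (Fin n) → List (Fin (n - 1)) → Equiv.Perm (Fin n)
  | π, [] => π
  | π, k :: w => finalPerm n (π * braidSwap n k) w

/-- A braid projection word is pure if the induced permutation of strands
is the identity. -/
def IsPure (n : ℕ) (w : List (Fin (n - 1))) : Prop := finalPerm n 1 w = 1

/-- A zero-diagonal matrix is T0 if `i < j < k`, `M i j = 0` and `M j k = 0`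
imply `M i k = 0`. -/
def IsT0 {n : ℕ} {α : Type*} [Zero α] (M : Matrix (Fin n) (Fin n) α) : Prop :=
  ∀ i j k : Fin n, i < j → j < k → M i j = 0 → M j k = 0 → M i k = 0

lemma finalPerm_append (n : ℕ) (u v : List (Fin (n-1))) : ∀ π,
    finalPerm n π (u ++ v) = finalPerm n (finalPerm n π u) v := by
  induction u with
  | nil => intro π; simp [finalPerm]
  | cons k u ih => intro π; simp [finalPerm, ih]

lemma CNaux_append (n : ℕ) (u v : List (Fin (n-1))) : ∀ π,
    CNaux n π (u ++ v) = CNaux n π u + CNaux n (finalPerm n π u) v := by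
  induction u with
  | nil => intro π; simp [CNaux, finalPerm]
  | cons k u ih => intro π; simp [CNaux, finalPerm, ih, add_assoc]

/-- The word realizing the c(a+1, a+c+1)-formation (0-indexed positions a..a+c). -/
def Wd (n a : ℕ) : ℕ → List (Fin (n-1))
  | 0 => []
  | c+1 => if h : a + c < n - 1 then
      (⟨a+c, h⟩ : Fin (n-1)) :: (Wd n a c ++ [(⟨a+c, h⟩ : Fin (n-1))]) else []

lemma Wd_main (n a : ℕ) : ∀ (c : ℕ) (hc0 : a + c ≤ n - 1) (hn : 1 ≤ n) (π : Equiv.Perm (Fin n)),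
    finalPerm n π (Wd n a c) = π ∧
    CNaux n π (Wd n a c) =
      ∑ t : Fin c, (Matrix.single (π ⟨a + t.val, by omega⟩) (π ⟨a + c, by omega⟩) 2 +
        Matrix.single (π ⟨a + c, by omega⟩) (π ⟨a + t.val, by omega⟩) 2) := by
  intro c
  induction c with
  | zero => intro h hn π; simp [Wd, finalPerm, CNaux]
  | succ c ih =>
    intro h hn π
    have hc : a + c < n - 1 := by omega
    have hcn : a + c + 1 < n := by omega
    set k : Fin (n-1) := ⟨a+c, hc⟩ with hk
    have hWd : Wd n a (c+1) = k :: (Wd n a c ++ [k]) := by simp [Wd, hc, hk]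
    have hpL : posL n k = ⟨a+c, by omega⟩ := rfl
    have hpR : posR n k = ⟨a+c+1, hcn⟩ := rfl
    have hb : ∀ (σ : Equiv.Perm (Fin n)), (σ * braidSwap n k) (⟨a+c, by omega⟩ : Fin n) = σ ⟨a+c+1, hcn⟩ := by
      intro σ
      simp [braidSwap, hpL, hpR, Equiv.swap_apply_left]
    have hb2 : ∀ (σ : Equiv.Perm (Fin n)), (σ * braidSwap n k) (⟨a+c+1, hcn⟩ : Fin n) = σ ⟨a+c, by omega⟩ := by
      intro σ
      simp [braidSwap, hpL, hpR, Equiv.swap_apply_right]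
    have hb3 : ∀ (σ : Equiv.Perm (Fin n)) (t : ℕ) (ht : t < c),
        (σ * braidSwap n k) (⟨a+t, by omega⟩ : Fin n) = σ ⟨a+t, by omega⟩ := by
      intro σ t ht
      have h1 : (⟨a+t, by omega⟩ : Fin n) ≠ posL n k := by
        simp [hpL, Fin.ext_iff]; omega
      have h2 : (⟨a+t, by omega⟩ : Fin n) ≠ posR n k := by
        simp [hpR, Fin.ext_iff]; omega
      simp [braidSwap, Equiv.swap_apply_of_ne_of_ne h1 h2]
    obtain ⟨ihF, ihC⟩ := ih (by omega) hn (π * braidSwap n k)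
    constructor
    · rw [hWd]
      show finalPerm n (π * braidSwap n k) (Wd n a c ++ [k]) = π
      rw [finalPerm_append, ihF]
      show π * braidSwap n k * braidSwap n k = π
      rw [mul_assoc]
      simp [braidSwap]
    · rw [hWd]
      show Matrix.single (π (posL n k)) (π (posR n k)) 1 +
        Matrix.single (π (posR n k)) (π (posL n k)) 1 +
        CNaux n (π * braidSwap n k) (Wd n a c ++ [k]) = _
      rw [CNaux_append, ihF, ihC]
      show _ + (_ + (Matrix.single ((π * braidSwap n k) (posL n k)) ((π * braidSwap n k) (posR n k)) 1 +
        Matrix.single ((π * braidSwap n k) (posR n k)) ((π * braidSwap n k) (posL n k)) 1 + CNaux n (π * braidSwap n k * braidSwap n k) [])) = _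
      rw [Fin.sum_univ_castSucc]
      have e1 : ∀ t : Fin c, (π * braidSwap n k) (⟨a + t.val, by omega⟩ : Fin n) = π ⟨a + t.val, by omega⟩ :=
        fun t => hb3 π t.val t.isLt
      simp only [CNaux, hpL, hpR, hb, hb2, e1, Fin.coe_castSucc]
      simp only [Nat.add_assoc, Fin.val_last]
      simp only [show (2:ℕ) = 1 + 1 from rfl, Matrix.single_add]
      abel

lemma sum_indicator (c a x : ℕ) :
    (∑ t ∈ Finset.range c, if x = a + t then (1:ℕ) else 0) =
      if a ≤ x ∧ x < a + c then 1 else 0 := by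
  induction c with
  | zero => rw [Finset.sum_range_zero]; split_ifs <;> omega
  | succ c ih =>
    rw [Finset.sum_range_succ, ih]
    split_ifs <;> omega

theorem stmt9 (n I l : ℕ) (hI : 1 ≤ I) (hIl : I < l) (hl : l ≤ n) :
    ∃ w : List (Fin (n - 1)), IsPure n w ∧ ∀ i j : Fin n,
      CN n w i j =
        if (j.val + 1 = l ∧ I ≤ i.val + 1 ∧ i.val + 1 ≤ l - 1) ∨
           (i.val + 1 = l ∧ I ≤ j.val + 1 ∧ j.val + 1 ≤ l - 1) then 2 else 0 := by
  have hn : 1 ≤ n := by omega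
  have hc0 : (I - 1) + (l - I) ≤ n - 1 := by omega
  obtain ⟨hF, hC⟩ := Wd_main n (I-1) (l - I) hc0 hn 1
  refine ⟨Wd n (I-1) (l-I), hF, fun i j => ?_⟩
  rw [CN, hC]
  have hl1 : I - 1 + (l - I) = l - 1 := by omega
  rw [Matrix.sum_apply]
  have hterm : ∀ t : Fin (l - I),
      ((Matrix.single ((1 : Equiv.Perm (Fin n)) ⟨I - 1 + t.val, by omega⟩)
          ((1 : Equiv.Perm (Fin n)) ⟨I - 1 + (l - I), by omega⟩) 2 +
        Matrix.single ((1 : Equiv.Perm (Fin n)) ⟨I - 1 + (l - I), by omega⟩)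
          ((1 : Equiv.Perm (Fin n)) ⟨I - 1 + t.val, by omega⟩) 2) : Matrix (Fin n) (Fin n) ℕ) i j
      = (if j.val = l - 1 then (if i.val = I - 1 + t.val then 2 else 0) else 0) +
        (if i.val = l - 1 then (if j.val = I - 1 + t.val then 2 else 0) else 0) := by
    intro t
    have ht : (t : ℕ) < l - I := t.isLt
    simp only [Equiv.Perm.one_apply, Matrix.add_apply, Matrix.single, Matrix.of_apply,
      Fin.mk.injEq, Fin.ext_iff, hl1]
    split_ifs <;> omega
  rw [Finset.sum_congr rfl (fun t _ => hterm t)]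
  rw [Fin.sum_univ_eq_sum_range
    (fun t => (if j.val = l - 1 then (if i.val = I - 1 + t then 2 else 0) else 0) +
        (if i.val = l - 1 then (if j.val = I - 1 + t then 2 else 0) else 0))]
  rw [Finset.sum_add_distrib]
  have key : ∀ x : ℕ, (∑ t ∈ Finset.range (l-I), if x = I - 1 + t then (2:ℕ) else 0)
      = if I - 1 ≤ x ∧ x < I - 1 + (l - I) then 2 else 0 := by
    intro x
    have := sum_indicator (l-I) (I-1) x
    calc (∑ t ∈ Finset.range (l-I), if x = I - 1 + t then (2:ℕ) else 0)
        = ∑ t ∈ Finset.range (l-I), 2 * (if x = I - 1 + t then (1:ℕ) else 0) := by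
          refine Finset.sum_congr rfl fun t _ => ?_; split_ifs <;> ring
      _ = 2 * ∑ t ∈ Finset.range (l-I), (if x = I - 1 + t then (1:ℕ) else 0) := by
          rw [Finset.mul_sum]
      _ = _ := by rw [this]; split_ifs <;> ring
  by_cases hj : (j : ℕ) = l - 1 <;> by_cases hi : (i : ℕ) = l - 1 <;>
    simp only [hj, hi, if_true, eq_self_iff_true, if_false, ite_self,
      Finset.sum_const_zero, add_zero, zero_add, key] <;>
    split_ifs <;> omega
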